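/- Define S : ℕ → ℕ by S(0)=S(1)=S(2)=0 and for n ≥ 3, S(n) = max over 1 ≤ a ≤ n of [C(a,3) + 2·C(a,2)·(n−a) + a·C(n−a,2) + S(n−a)], where C denotes the binomial coefficient. Then S is well-defined (the recursion terminates) and S(n) ≤ 3·C(n,3) for all n. -/

import Mathlib

/-- The galled-caterpillar recursion: `S 0 = S 1 = S 2 = 0` and for `n ≥ 3`,
`S n = max_{1 ≤ a ≤ n} [C(a,3) + 2·C(a,2)·(n−a) + a·C(n−a,2) + S(n−a)]`.
That this definition elaborates witnesses that the recursion is well-founded. -/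
def S : ℕ → ℕ
  | 0 => 0
  | 1 => 0
  | 2 => 0
  | (n + 3) =>
      ((Finset.Icc 1 (n + 3)).attach.sup fun a =>
        Nat.choose a.1 3 + 2 * Nat.choose a.1 2 * (n + 3 - a.1) +
          a.1 * Nat.choose (n + 3 - a.1) 2 + S (n + 3 - a.1))
  termination_by n => n
  decreasing_by
    have := a.2
    simp only [Finset.mem_Icc] at this
    omega

lemma vdm3 (a m : ℕ) : (a + m).choose 3 =
    a.choose 3 + a.choose 2 * m + a * m.choose 2 + m.choose 3 := by
  rw [Nat.add_choose_eq]
  rw [show (Finset.HasAntidiagonal.antidiagonal 3 : Finset (ℕ × ℕ)) = {(0,3),(1,2),(2,1),(3,0)} by decide]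
  simp [Nat.choose_one_right]
  ring

theorem S_le_three_choose (n : ℕ) : S n ≤ 3 * Nat.choose n 3 := by
  induction n using Nat.strong_induction_on with
  | _ n ih =>
    match n with
    | 0 => simp [S]
    | 1 => simp [S]
    | 2 => simp [S]
    | (k + 3) =>
      rw [S]
      apply Finset.sup_le
      intro a _
      have ha := a.2
      simp only [Finset.mem_Icc] at ha
      set m := k + 3 - a.1 with hm
      have hS : S m ≤ 3 * m.choose 3 := ih m (by omega)
      have hsum : a.1 + m = k + 3 := by omega
      calc a.1.choose 3 + 2 * a.1.choose 2 * m + a.1 * m.choose 2 + S m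
          ≤ a.1.choose 3 + 2 * a.1.choose 2 * m + a.1 * m.choose 2 + 3 * m.choose 3 := by
            omega
        _ ≤ 3 * (a.1 + m).choose 3 := by
            rw [vdm3]; ring_nf; omega
        _ = 3 * (k + 3).choose 3 := by rw [hsum]
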